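/- Let X be a Polish space and Ω = C([0,∞) → X) with the compact-open topology. Let Φ be a countable family of bounded continuous real-valued functions on X that strongly separates points of X and is closed under multiplication, and let Λ be a dense subset of (0,∞). If P₁ and P₂ are Borel probability measures on Ω such that ∫₀^∞ e^{−λt} ∫_Ω φ(w(t)) P₁(dw) dt = ∫₀^∞ e^{−λt} ∫_Ω φ(w(t)) P₂(dw) dt for every λ ∈ Λ and every φ ∈ Φ, then the one-dimensional marginals agree: P₁ ∘ π_t^{-1} = P₂ ∘ π_t^{-1} for every t ≥ 0, where π_t(w) = w(t). -/

import Mathlib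

open MeasureTheory Set
open scoped NNReal

noncomputable section

/-- The space `Ω = C([0,∞) → X)` with the compact-open topology. -/
abbrev IPath (X : Type*) [TopologicalSpace X] : Type _ := C(ℝ≥0, X)

variable {X : Type*} [TopologicalSpace X]

/-- The Borel σ-algebra on the path space. -/
instance : MeasurableSpace (IPath X) := borel _
instance : BorelSpace (IPath X) := ⟨rfl⟩

open Filter in
lemma aux_h_continuous (G : ℝ → ℝ) (hG : Continuous G) (M : ℝ) (hb : ∀ s, |G s| ≤ M) :
    Continuous (fun u : ℝ => if 0 < u then u * G (-Real.log u) else 0) := by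
  set h : ℝ → ℝ := fun u => if 0 < u then u * G (-Real.log u) else 0 with hh
  have hbound : ∀ v, ‖h v‖ ≤ M * |v| := by
    intro v
    rcases lt_or_ge 0 v with hv | hv
    · simp only [hh, if_pos hv]
      rw [Real.norm_eq_abs, abs_mul, abs_of_pos hv, mul_comm]
      exact mul_le_mul_of_nonneg_right (hb _) hv.le
    · simp only [hh, if_neg (not_lt.2 hv), norm_zero]
      exact mul_nonneg ((abs_nonneg (G 0)).trans (hb 0)) (abs_nonneg v)
  rw [continuous_iff_continuousAt]
  intro u
  rcases lt_trichotomy u 0 with hu | hu | hu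
  · have : h =ᶠ[nhds u] fun _ => 0 := by
      filter_upwards [Iio_mem_nhds hu] with v hv
      simp only [hh]
      rw [if_neg (not_lt.2 (le_of_lt (mem_Iio.mp hv)))]
    exact ContinuousAt.congr continuousAt_const this.symm
  · subst hu
    have h0 : h 0 = 0 := by simp [hh]
    unfold ContinuousAt
    rw [h0]
    apply squeeze_zero_norm hbound
    have : Continuous fun v : ℝ => M * |v| := continuous_const.mul continuous_abs
    simpa using this.tendsto 0
  · have : h =ᶠ[nhds u] fun v => v * G (-Real.log v) := by
      filter_upwards [Ioi_mem_nhds hu] with v hv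
      simp only [hh]
      rw [if_pos (mem_Ioi.mp hv)]
    refine ContinuousAt.congr ?_ this.symm
    exact continuousAt_id.mul (hG.continuousAt.comp (Real.continuousAt_log hu.ne').neg)

lemma zero_of_laplace_zero (G : ℝ → ℝ) (hG : Continuous G) (M : ℝ) (hb : ∀ s, |G s| ≤ M)
    (h : ∀ n : ℕ, (∫ s in Ioi (0:ℝ), Real.exp (-((n:ℝ)+2) * s) * G s) = 0) :
    ∀ s ∈ Ici (0:ℝ), G s = 0 := by
  have hM : 0 ≤ M := (abs_nonneg _).trans (hb 0)
  set h₀ : ℝ → ℝ := fun u => if 0 < u then u * G (-Real.log u) else 0 with hh₀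
  have hcont : Continuous h₀ := aux_h_continuous G hG M hb
  have hbound : ∀ v, |h₀ v| ≤ M * |v| := by
    intro v
    rcases lt_or_ge 0 v with hv | hv
    · simp only [hh₀, if_pos hv]
      rw [abs_mul, abs_of_pos hv, mul_comm]
      exact mul_le_mul_of_nonneg_right (hb _) hv.le
    · simp only [hh₀, if_neg (not_lt.2 hv), abs_zero]
      exact mul_nonneg ((abs_nonneg (G 0)).trans (hb 0)) (abs_nonneg v)
  -- image of (0,∞) under exp(-·)
  have himage : (fun t : ℝ => Real.exp (-t)) '' (Ioi 0) = Ioo (0:ℝ) 1 := by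
    ext u
    constructor
    · rintro ⟨t, ht, rfl⟩
      exact ⟨Real.exp_pos _, Real.exp_lt_one_iff.2 (neg_neg_iff_pos.2 ht)⟩
    · rintro ⟨hu0, hu1⟩
      exact ⟨-Real.log u, by simpa using Real.log_neg hu0 hu1, by simp [Real.exp_log hu0]⟩
  have hderiv : ∀ x ∈ Ioi (0:ℝ), HasDerivWithinAt (fun t : ℝ => Real.exp (-t))
      (-Real.exp (-x)) (Ioi 0) x := by
    intro x _
    simpa [Function.comp_def] using ((Real.hasDerivAt_exp (-x)).comp x (hasDerivAt_neg x)).hasDerivWithinAt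
  have hinj : InjOn (fun t : ℝ => Real.exp (-t)) (Ioi 0) := fun a _ b _ hab =>
    neg_injective (Real.exp_injective hab)
  -- moments vanish
  have hmom : ∀ n : ℕ, (∫ u in Ioo (0:ℝ) 1, u ^ n * h₀ u) = 0 := by
    intro n
    rw [← himage, integral_image_eq_integral_abs_deriv_smul measurableSet_Ioi hderiv hinj
      (fun u => u ^ n * h₀ u)]
    refine Eq.trans ?_ (h n)
    apply setIntegral_congr_fun measurableSet_Ioi
    intro x _
    have hexp : (0:ℝ) < Real.exp (-x) := Real.exp_pos _
    simp only [hh₀, if_pos hexp, Real.log_exp, neg_neg, smul_eq_mul, abs_neg,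
      abs_of_pos hexp]
    rw [← Real.exp_nat_mul, ← mul_assoc, ← mul_assoc, ← Real.exp_add, ← Real.exp_add]
    ring_nf
  -- integrability helper
  have hint : ∀ k : ℝ → ℝ, Continuous k → IntegrableOn (fun u => k u * h₀ u) (Ioo (0:ℝ) 1) := by
    intro k hk
    exact ((hk.mul hcont).integrableOn_Icc (a := (0:ℝ)) (b := 1)).mono_set Ioo_subset_Icc_self
  -- polynomials
  have hpoly : ∀ p : Polynomial ℝ, (∫ u in Ioo (0:ℝ) 1, p.eval u * h₀ u) = 0 := by
    intro p
    induction p using Polynomial.induction_on' with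
    | add p q hp hq =>
      have h1 := hint _ (Polynomial.continuous p)
      have h2 := hint _ (Polynomial.continuous q)
      simp only [Polynomial.eval_add, add_mul]
      rw [integral_add h1 h2, hp, hq, add_zero]
    | monomial n a =>
      simp only [Polynomial.eval_monomial]
      simp only [mul_assoc]
      rw [integral_const_mul, hmom n, mul_zero]
  -- ∫ h₀² = 0
  have hsq : (∫ u in Ioo (0:ℝ) 1, h₀ u * h₀ u) = 0 := by
    have hnonneg : (0:ℝ) ≤ ∫ u in Ioo (0:ℝ) 1, h₀ u * h₀ u :=
      setIntegral_nonneg measurableSet_Ioo (fun u _ => mul_self_nonneg _)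
    have hle : ∀ ε > (0:ℝ), (∫ u in Ioo (0:ℝ) 1, h₀ u * h₀ u) ≤ ε * M := by
      intro ε hε
      -- approximate h₀ on Icc 0 1 by a polynomial
      have hdense := polynomialFunctions_closure_eq_top (0:ℝ) 1
      set hK : C(Icc (0:ℝ) 1, ℝ) := ⟨fun u => h₀ u, hcont.comp continuous_subtype_val⟩ with hKdef
      have hmem : hK ∈ closure ((polynomialFunctions (Icc (0:ℝ) 1)) : Set C(Icc (0:ℝ) 1, ℝ)) := by
        have : hK ∈ (polynomialFunctions (Icc (0:ℝ) 1)).topologicalClosure := by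
          rw [hdense]; trivial
        exact this
      rw [Metric.mem_closure_iff] at hmem
      obtain ⟨g, hgmem, hgdist⟩ := hmem ε hε
      rw [polynomialFunctions_coe] at hgmem
      obtain ⟨p, rfl⟩ := hgmem
      have happrox : ∀ u ∈ Icc (0:ℝ) 1, |p.eval u - h₀ u| ≤ ε := by
        intro u hu
        have := ContinuousMap.dist_apply_le_dist (f := (Polynomial.toContinuousMapOnAlgHom
          (Icc (0:ℝ) 1)) p) (g := hK) ⟨u, hu⟩
        rw [Real.dist_eq] at this
        have h2 : |p.eval u - h₀ u| ≤ dist ((Polynomial.toContinuousMapOnAlgHom (Icc (0:ℝ) 1)) p) hK := by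
          simpa [hKdef] using this
        exact h2.trans (by rw [dist_comm]; exact hgdist.le)
      have hsplit : (∫ u in Ioo (0:ℝ) 1, h₀ u * h₀ u)
          = ∫ u in Ioo (0:ℝ) 1, (h₀ u - p.eval u) * h₀ u := by
        have h1 := hint _ hcont
        have h2 := hint _ (Polynomial.continuous p)
        have : (fun u => (h₀ u - Polynomial.eval u p) * h₀ u)
            = fun u => h₀ u * h₀ u - Polynomial.eval u p * h₀ u := by
          funext u; ring
        rw [this, integral_sub h1 h2, hpoly p, sub_zero]
      rw [hsplit]
      have hboundineq : ∀ u ∈ Ioo (0:ℝ) 1, (h₀ u - p.eval u) * h₀ u ≤ ε * M := by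
        intro u hu
        have hu' : u ∈ Icc (0:ℝ) 1 := Ioo_subset_Icc_self hu
        have h1 : |h₀ u - p.eval u| ≤ ε := by rw [abs_sub_comm]; exact happrox u hu'
        have h2 : |h₀ u| ≤ M := by
          calc |h₀ u| ≤ M * |u| := hbound u
          _ ≤ M * 1 := by
            apply mul_le_mul_of_nonneg_left _ hM
            rw [abs_of_pos hu.1]; exact hu.2.le
          _ = M := mul_one M
        calc (h₀ u - p.eval u) * h₀ u ≤ |(h₀ u - p.eval u) * h₀ u| := le_abs_self _
        _ = |h₀ u - p.eval u| * |h₀ u| := abs_mul _ _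
        _ ≤ ε * M := mul_le_mul h1 h2 (abs_nonneg _) hε.le
      calc (∫ u in Ioo (0:ℝ) 1, (h₀ u - p.eval u) * h₀ u)
          ≤ ∫ _u in Ioo (0:ℝ) 1, ε * M := by
            apply setIntegral_mono_on _ (integrableOn_const (by simp))
              measurableSet_Ioo hboundineq
            have := hint (fun u => h₀ u - Polynomial.eval u p) (hcont.sub (Polynomial.continuous p))
            exact this.congr_fun (by intro u _; rfl) measurableSet_Ioo
        _ ≤ ε * M := by
            rw [setIntegral_const]
            simp [Real.volume_Ioo]
    -- conclude
    rcases eq_or_lt_of_le hnonneg with h' | h'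
    · exact h'.symm
    · exfalso
      have hM' : 0 < M + 1 := by linarith
      have := hle ((∫ u in Ioo (0:ℝ) 1, h₀ u * h₀ u) / (2 * (M + 1)))
        (by positivity)
      set I := ∫ u in Ioo (0:ℝ) 1, h₀ u * h₀ u
      have hMle : I / (2 * (M + 1)) * M ≤ I / 2 := by
        rw [div_mul_eq_mul_div, div_le_div_iff₀ (by positivity) (by norm_num)]
        nlinarith
      linarith
  -- h₀ = 0 on Ioo 0 1
  have hzero : ∀ u ∈ Ioo (0:ℝ) 1, h₀ u = 0 := by
    intro u₀ hu₀
    by_contra hne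
    have hpos : 0 < volume (Function.support (fun u => h₀ u * h₀ u) ∩ Ioo (0:ℝ) 1) := by
      have hopen : IsOpen ({u : ℝ | h₀ u ≠ 0} ∩ Ioo 0 1) :=
        (isOpen_ne_fun hcont continuous_const).inter isOpen_Ioo
      have hsub : ({u : ℝ | h₀ u ≠ 0} ∩ Ioo 0 1) ⊆
          Function.support (fun u => h₀ u * h₀ u) ∩ Ioo (0:ℝ) 1 := by
        rintro u ⟨hu1, hu2⟩
        exact ⟨mul_ne_zero hu1 hu1, hu2⟩
      refine lt_of_lt_of_le ?_ (measure_mono hsub)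
      exact hopen.measure_pos volume ⟨u₀, hne, hu₀⟩
    have := (setIntegral_pos_iff_support_of_nonneg_ae
      (Filter.Eventually.of_forall (fun u => mul_self_nonneg (h₀ u)))
      (hint _ hcont)).2 hpos
    rw [hsq] at this
    exact lt_irrefl _ this
  -- conclude G = 0 on Ici 0
  have hIoi : ∀ s ∈ Ioi (0:ℝ), G s = 0 := by
    intro s hs
    have hu : Real.exp (-s) ∈ Ioo (0:ℝ) 1 :=
      ⟨Real.exp_pos _, Real.exp_lt_one_iff.2 (neg_neg_iff_pos.2 hs)⟩
    have := hzero _ hu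
    simp only [hh₀, if_pos hu.1, Real.log_exp, neg_neg] at this
    rcases mul_eq_zero.1 this with h' | h'
    · exact absurd h' (Real.exp_ne_zero _)
    · exact h'
  have heqon : EqOn G (fun _ => 0) (Ioi (0:ℝ)) := fun s hs => hIoi s hs
  have : EqOn G (fun _ => 0) (closure (Ioi (0:ℝ))) := heqon.closure hG continuous_const
  rw [closure_Ioi] at this
  exact this


lemma laplace_integrable (F : ℝ → ℝ) (hF : Continuous F) (M : ℝ) (hb : ∀ s, |F s| ≤ M)
    {lam : ℝ} (hlam : 0 < lam) :
    IntegrableOn (fun s => Real.exp (-lam * s) * F s) (Ioi (0:ℝ)) := by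
  apply Integrable.mono' ((exp_neg_integrableOn_Ioi 0 hlam).mul_const M)
  · exact ((Real.continuous_exp.comp (continuous_const.mul continuous_id)).mul hF).aestronglyMeasurable
  · filter_upwards with s
    rw [Real.norm_eq_abs, abs_mul, abs_of_pos (Real.exp_pos _)]
    exact mul_le_mul_of_nonneg_left (hb s) (Real.exp_pos _).le

open Filter in
lemma laplace_tendsto (F : ℝ → ℝ) (hF : Continuous F) (M : ℝ) (hb : ∀ s, |F s| ≤ M)
    (a : ℕ → ℝ) (lam : ℝ) (hlam : 0 < lam) (hten : Tendsto a atTop (nhds lam)) :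
    Tendsto (fun n => ∫ s in Ioi (0:ℝ), Real.exp (-(a n) * s) * F s) atTop
      (nhds (∫ s in Ioi (0:ℝ), Real.exp (-lam * s) * F s)) := by
  apply tendsto_integral_filter_of_dominated_convergence
    (fun s => Real.exp (-(lam/2) * s) * M)
  · filter_upwards with n
    exact ((Real.continuous_exp.comp (continuous_const.mul continuous_id)).mul
      hF).aestronglyMeasurable.restrict
  · have hev : ∀ᶠ n in atTop, lam / 2 < a n := hten.eventually (eventually_gt_nhds (half_lt_self hlam))
    filter_upwards [hev] with n hn
    rw [ae_restrict_iff' measurableSet_Ioi]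
    filter_upwards with s hs
    rw [Real.norm_eq_abs, abs_mul, abs_of_pos (Real.exp_pos _)]
    have h1 : Real.exp (-(a n) * s) ≤ Real.exp (-(lam/2) * s) := by
      apply Real.exp_le_exp.2
      have : (0:ℝ) < s := hs
      nlinarith
    calc Real.exp (-(a n) * s) * |F s| ≤ Real.exp (-(a n) * s) * M :=
          mul_le_mul_of_nonneg_left (hb s) (Real.exp_pos _).le
      _ ≤ Real.exp (-(lam/2) * s) * M :=
          mul_le_mul_of_nonneg_right h1 ((abs_nonneg _).trans (hb 0))
  · exact (exp_neg_integrableOn_Ioi 0 (half_pos hlam)).mul_const M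
  · filter_upwards with s
    have : Tendsto (fun n => -(a n) * s) atTop (nhds (-lam * s)) :=
      (hten.neg).mul_const s
    exact ((Real.continuous_exp.tendsto _).comp this).mul_const (F s)

open Filter in
lemma eqOn_of_laplace_eqOn (F₁ F₂ : ℝ → ℝ) (h₁ : Continuous F₁) (h₂ : Continuous F₂)
    (M : ℝ) (hb₁ : ∀ s, |F₁ s| ≤ M) (hb₂ : ∀ s, |F₂ s| ≤ M)
    (Λ : Set ℝ) (hΛ : Λ ⊆ Ioi (0:ℝ)) (hΛdense : Ioi (0:ℝ) ⊆ closure Λ)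
    (h : ∀ lam ∈ Λ, (∫ s in Ioi (0:ℝ), Real.exp (-lam * s) * F₁ s)
      = ∫ s in Ioi (0:ℝ), Real.exp (-lam * s) * F₂ s) :
    ∀ s ∈ Ici (0:ℝ), F₁ s = F₂ s := by
  -- extend to all lam > 0
  have hall : ∀ lam : ℝ, 0 < lam → (∫ s in Ioi (0:ℝ), Real.exp (-lam * s) * F₁ s)
      = ∫ s in Ioi (0:ℝ), Real.exp (-lam * s) * F₂ s := by
    intro lam hlam
    obtain ⟨a, ha, haten⟩ := mem_closure_iff_seq_limit.1 (hΛdense hlam)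
    have t1 := laplace_tendsto F₁ h₁ M hb₁ a lam hlam haten
    have t2 := laplace_tendsto F₂ h₂ M hb₂ a lam hlam haten
    have : (fun n => ∫ s in Ioi (0:ℝ), Real.exp (-(a n) * s) * F₁ s)
        = fun n => ∫ s in Ioi (0:ℝ), Real.exp (-(a n) * s) * F₂ s := by
      funext n; exact h (a n) (ha n)
    rw [this] at t1
    exact tendsto_nhds_unique t1 t2
  -- apply uniqueness
  set G : ℝ → ℝ := fun s => F₁ s - F₂ s with hGdef
  have hGzero : ∀ s ∈ Ici (0:ℝ), G s = 0 := by
    apply zero_of_laplace_zero G (h₁.sub h₂) (M + M)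
    · intro s
      calc |F₁ s - F₂ s| ≤ |F₁ s| + |F₂ s| := abs_sub _ _
        _ ≤ M + M := add_le_add (hb₁ s) (hb₂ s)
    · intro n
      have hpos : (0:ℝ) < (n:ℝ) + 2 := by positivity
      have : (fun s => Real.exp (-((n:ℝ)+2) * s) * G s)
          = fun s => Real.exp (-((n:ℝ)+2) * s) * F₁ s - Real.exp (-((n:ℝ)+2) * s) * F₂ s := by
        funext s; simp [hGdef]; ring
      rw [this, integral_sub (laplace_integrable F₁ h₁ M hb₁ hpos)
        (laplace_integrable F₂ h₂ M hb₂ hpos), hall _ hpos, sub_self]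
  intro s hs
  have := hGzero s hs
  simpa [hGdef, sub_eq_zero] using this



lemma mul_mem_spanPhi {X : Type*} {Φ : Set (X → ℝ)}
    (hΦmul : ∀ φ ∈ Φ, ∀ ψ ∈ Φ, (fun y => φ y * ψ y) ∈ Φ)
    {f g : X → ℝ} (hf : f ∈ Submodule.span ℝ (Φ ∪ {1}))
    (hg : g ∈ Submodule.span ℝ (Φ ∪ {1})) : f * g ∈ Submodule.span ℝ (Φ ∪ {1}) := by
  have base : ∀ x ∈ Φ ∪ {(1 : X → ℝ)}, ∀ g ∈ Submodule.span ℝ (Φ ∪ {1}),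
      x * g ∈ Submodule.span ℝ (Φ ∪ {1}) := by
    intro x hx g hg
    induction hg using Submodule.span_induction with
    | mem y hy =>
      rcases hx with hx | hx <;> rcases hy with hy | hy
      · exact Submodule.subset_span (Or.inl (hΦmul _ hx _ hy))
      · rw [mem_singleton_iff] at hy; subst hy
        rw [mul_one]; exact Submodule.subset_span (Or.inl hx)
      · rw [mem_singleton_iff] at hx; subst hx
        rw [one_mul]; exact Submodule.subset_span (Or.inl hy)
      · rw [mem_singleton_iff] at hx; subst hx
        rw [one_mul]; exact Submodule.subset_span (Or.inr hy)
    | zero => rw [mul_zero]; exact Submodule.zero_mem _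
    | add a b ha hb pa pb => rw [mul_add]; exact Submodule.add_mem _ pa pb
    | smul c a ha pa => rw [mul_smul_comm]; exact Submodule.smul_mem _ _ pa
  induction hf using Submodule.span_induction with
  | mem x hx => exact base x hx g hg
  | zero => rw [zero_mul]; exact Submodule.zero_mem _
  | add a b ha hb pa pb => rw [add_mul]; exact Submodule.add_mem _ pa pb
  | smul c a ha pa => rw [smul_mul_assoc]; exact Submodule.smul_mem _ _ pa

lemma integrable_of_bounded_cont {X : Type*} [MeasurableSpace X] [TopologicalSpace X]
    [OpensMeasurableSpace X] (μ : Measure X) [IsFiniteMeasure μ] (f : X → ℝ)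
    (hc : Continuous f) (M : ℝ) (hb : ∀ y, |f y| ≤ M) : Integrable f μ :=
  ⟨hc.aestronglyMeasurable,
    HasFiniteIntegral.of_bounded (C := M) (Filter.Eventually.of_forall fun y => by
      simpa [Real.norm_eq_abs] using hb y)⟩

lemma span_integral_eq {X : Type*} [MeasurableSpace X] [TopologicalSpace X]
    [OpensMeasurableSpace X] {Φ : Set (X → ℝ)}
    (hΦc : ∀ φ ∈ Φ, Continuous φ) (hΦb : ∀ φ ∈ Φ, ∃ M, ∀ y, |φ y| ≤ M)
    (μ₁ μ₂ : Measure X) [IsProbabilityMeasure μ₁] [IsProbabilityMeasure μ₂]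
    (h : ∀ φ ∈ Φ, (∫ x, φ x ∂μ₁) = ∫ x, φ x ∂μ₂) :
    ∀ f ∈ Submodule.span ℝ (Φ ∪ {1}),
      Integrable f μ₁ ∧ Integrable f μ₂ ∧ (∫ x, f x ∂μ₁) = ∫ x, f x ∂μ₂ := by
  intro f hf
  induction hf using Submodule.span_induction with
  | mem x hx =>
    rcases hx with hx | hx
    · obtain ⟨M, hM⟩ := hΦb x hx
      exact ⟨integrable_of_bounded_cont μ₁ x (hΦc x hx) M hM,
        integrable_of_bounded_cont μ₂ x (hΦc x hx) M hM, h x hx⟩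
    · rw [mem_singleton_iff] at hx; subst hx
      refine ⟨integrable_const 1, integrable_const 1, ?_⟩
      simp [integral_const, measure_univ]
  | zero =>
    refine ⟨integrable_zero _ _ _, integrable_zero _ _ _, ?_⟩
    simp
  | add a b ha hb pa pb =>
    refine ⟨pa.1.add pb.1, pa.2.1.add pb.2.1, ?_⟩
    have e1 : (∫ x, (a + b) x ∂μ₁) = (∫ x, a x ∂μ₁) + ∫ x, b x ∂μ₁ := by
      simp only [Pi.add_apply]; exact integral_add pa.1 pb.1
    have e2 : (∫ x, (a + b) x ∂μ₂) = (∫ x, a x ∂μ₂) + ∫ x, b x ∂μ₂ := by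
      simp only [Pi.add_apply]; exact integral_add pa.2.1 pb.2.1
    rw [e1, e2, pa.2.2, pb.2.2]
  | smul c a ha pa =>
    refine ⟨pa.1.smul c, pa.2.1.smul c, ?_⟩
    have e1 : (∫ x, (c • a) x ∂μ₁) = c • ∫ x, a x ∂μ₁ := by
      simp only [Pi.smul_apply]; exact integral_smul c a
    have e2 : (∫ x, (c • a) x ∂μ₂) = c • ∫ x, a x ∂μ₂ := by
      simp only [Pi.smul_apply]; exact integral_smul c a
    rw [e1, e2, pa.2.2]

lemma joint_eq {X : Type*} [TopologicalSpace X] [MeasurableSpace X] [OpensMeasurableSpace X]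
    {Φ : Set (X → ℝ)}
    (hΦc : ∀ φ ∈ Φ, Continuous φ) (hΦb : ∀ φ ∈ Φ, ∃ M, ∀ y, |φ y| ≤ M)
    (hΦmul : ∀ φ ∈ Φ, ∀ ψ ∈ Φ, (fun y => φ y * ψ y) ∈ Φ)
    (μ₁ μ₂ : Measure X) [IsProbabilityMeasure μ₁] [IsProbabilityMeasure μ₂]
    (h : ∀ φ ∈ Φ, (∫ x, φ x ∂μ₁) = ∫ x, φ x ∂μ₂)
    {ι : Type} [Fintype ι] (ψ : ι → X → ℝ) (hψ : ∀ j, ψ j ∈ Φ) :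
    Measure.map (fun x (j : ι) => ψ j x) μ₁ = Measure.map (fun x (j : ι) => ψ j x) μ₂ := by
  set e : X → (ι → ℝ) := fun x j => ψ j x with he_def
  have he : Continuous e := continuous_pi fun j => hΦc _ (hψ j)
  have hem : Measurable e := he.measurable
  haveI : IsProbabilityMeasure (Measure.map e μ₁) := Measure.isProbabilityMeasure_map hem.aemeasurable
  haveI : IsProbabilityMeasure (Measure.map e μ₂) := Measure.isProbabilityMeasure_map hem.aemeasurable
  -- real-valued version
  have claim : ∀ g : (ι → ℝ) → ℝ, Continuous g → (∃ C, ∀ p, |g p| ≤ C) →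
      (∫ x, g (e x) ∂μ₁) = ∫ x, g (e x) ∂μ₂ := by
    intro g hgc ⟨C, hgb⟩
    apply eq_of_forall_dist_le
    intro ε hε
    -- the compact box
    choose M hM using fun j => hΦb (ψ j) (hψ j)
    set K : Set (ι → ℝ) := Set.pi univ (fun j => Icc (-(M j)) (M j)) with hK_def
    have hK : IsCompact K := isCompact_univ_pi fun j => isCompact_Icc
    haveI : CompactSpace K := isCompact_iff_compactSpace.mp hK
    have heK : ∀ x, e x ∈ K := by
      intro x
      rw [hK_def, mem_univ_pi]
      intro j
      exact abs_le.mp (hM j x)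
    set e' : X → K := fun x => ⟨e x, heK x⟩ with he'_def
    -- coordinate functions on K and the subalgebra they generate
    set coord : ι → C(K, ℝ) := fun j => ⟨fun p => (p : ι → ℝ) j,
      (continuous_apply j).comp continuous_subtype_val⟩ with hcoord_def
    set A : Subalgebra ℝ C(K, ℝ) := Algebra.adjoin ℝ (Set.range coord) with hA_def
    have hsep : A.SeparatesPoints := by
      intro p q hpq
      have hpq' : (p : ι → ℝ) ≠ q := fun hc => hpq (Subtype.ext hc)
      obtain ⟨j, hj⟩ := Function.ne_iff.mp hpq'
      exact ⟨coord j, ⟨mem_image_of_mem _ (Algebra.subset_adjoin (mem_range_self j)), hj⟩⟩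
    obtain ⟨p, hp⟩ := ContinuousMap.exists_mem_subalgebra_near_continuous_of_separatesPoints
      A hsep (fun k : K => g k) (hgc.comp continuous_subtype_val) (ε/4) (by positivity)
    set q : X → ℝ := fun x => (p : C(K, ℝ)) (e' x) with hq_def
    have hqspan : q ∈ Submodule.span ℝ (Φ ∪ {1}) := by
      have key : ∀ r ∈ A, (fun x => (r : C(K,ℝ)) (e' x)) ∈ Submodule.span ℝ (Φ ∪ {1}) := by
        intro r hr
        rw [hA_def] at hr
        induction hr using Algebra.adjoin_induction with
        | mem y hy =>
          obtain ⟨j, rfl⟩ := hy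
          exact Submodule.subset_span (Or.inl (hψ j))
        | algebraMap c =>
          have : (fun x : X => (algebraMap ℝ C(K,ℝ) c) (e' x)) = c • (1 : X → ℝ) := by
            funext x; simp
          rw [this]
          exact Submodule.smul_mem _ _ (Submodule.subset_span (Or.inr rfl))
        | add y z hy hz py pz =>
          have : (fun x : X => (y + z) (e' x))
              = (fun x : X => y (e' x)) + fun x : X => z (e' x) := by
            funext x; simp
          rw [this]
          exact Submodule.add_mem _ py pz
        | mul y z hy hz py pz =>
          have : (fun x : X => (y * z) (e' x))
              = (fun x : X => y (e' x)) * fun x : X => z (e' x) := by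
            funext x; simp
          rw [this]
          exact mul_mem_spanPhi hΦmul py pz
      exact key p p.2
    obtain ⟨hq1, hq2, hqint⟩ := span_integral_eq hΦc hΦb μ₁ μ₂ h q hqspan
    have hge_cont : Continuous fun x => g (e x) := hgc.comp he
    have hge1 : Integrable (fun x => g (e x)) μ₁ :=
      integrable_of_bounded_cont μ₁ _ hge_cont C (fun y => hgb _)
    have hge2 : Integrable (fun x => g (e x)) μ₂ :=
      integrable_of_bounded_cont μ₂ _ hge_cont C (fun y => hgb _)
    have hptwise : ∀ x, ‖g (e x) - q x‖ ≤ ε/4 := by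
      intro x
      have := hp (e' x)
      rw [norm_sub_rev] at this
      exact this.le
    have hbound : ∀ (μ : Measure X) (h1 : Integrable (fun x => g (e x)) μ)
        (h2 : Integrable q μ) (hprob : IsProbabilityMeasure μ),
        ‖(∫ x, g (e x) ∂μ) - ∫ x, q x ∂μ‖ ≤ ε/4 := by
      intro μ h1 h2 hprob
      rw [← integral_sub h1 h2]
      have := norm_integral_le_of_norm_le_const (μ := μ)
        (f := fun x => g (e x) - q x) (C := ε/4) (Filter.Eventually.of_forall hptwise)
      simpa [measure_univ] using this
    calc dist (∫ x, g (e x) ∂μ₁) (∫ x, g (e x) ∂μ₂)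
        ≤ dist (∫ x, g (e x) ∂μ₁) (∫ x, q x ∂μ₁)
          + dist (∫ x, q x ∂μ₁) (∫ x, g (e x) ∂μ₂) := dist_triangle _ _ _
      _ ≤ dist (∫ x, g (e x) ∂μ₁) (∫ x, q x ∂μ₁)
          + (dist (∫ x, q x ∂μ₁) (∫ x, q x ∂μ₂)
            + dist (∫ x, q x ∂μ₂) (∫ x, g (e x) ∂μ₂)) := by
            gcongr
            exact dist_triangle _ _ _
      _ ≤ ε/4 + (0 + ε/4) := by
          gcongr
          · rw [Real.dist_eq]
            exact hbound μ₁ hge1 hq1 ‹_›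
          · rw [hqint, dist_self]
          · rw [Real.dist_eq, abs_sub_comm]
            exact hbound μ₂ hge2 hq2 ‹_›
      _ ≤ ε := by linarith
  -- now the lintegral version
  apply ext_of_forall_lintegral_eq_of_IsFiniteMeasure
  intro f
  have hgc : Continuous fun p : ι → ℝ => ((f p : ℝ)) := NNReal.continuous_coe.comp f.continuous
  obtain ⟨Cf, hCf⟩ := f.bounded
  have hgb : ∀ p, |((f p : ℝ))| ≤ (f 0 : ℝ) + Cf := by
    intro p
    rw [abs_of_nonneg (f p).coe_nonneg]
    have h1 : dist (f p) (f 0) ≤ Cf := hCf p 0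
    rw [NNReal.dist_eq] at h1
    have h2 := le_abs_self ((f p : ℝ) - (f 0 : ℝ))
    linarith
  have hfint : ∀ (ν : Measure (ι → ℝ)) (_ : IsFiniteMeasure ν),
      Integrable (fun p => (f p : ℝ)) ν := fun ν hν =>
    integrable_of_bounded_cont ν _ hgc _ hgb
  rw [lintegral_coe_eq_integral f (hfint _ inferInstance),
    lintegral_coe_eq_integral f (hfint _ inferInstance)]
  congr 1
  rw [integral_map (f := fun p => ((f p : ℝ))) hem.aemeasurable hgc.aestronglyMeasurable,
    integral_map (f := fun p => ((f p : ℝ))) hem.aemeasurable hgc.aestronglyMeasurable]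
  exact claim _ hgc ⟨_, hgb⟩

theorem measure_ext_Phi {X : Type*} [TopologicalSpace X] [PolishSpace X] [MeasurableSpace X]
    [BorelSpace X] (Φ : Set (X → ℝ)) (hΦcount : Φ.Countable)
    (hΦc : ∀ φ ∈ Φ, Continuous φ)
    (hΦb : ∀ φ ∈ Φ, ∃ M, ∀ y, |φ y| ≤ M)
    (hΦsep : ∀ x : X, ∀ V ∈ nhds x, ∃ φ ∈ Φ, ∃ ε > 0, ∀ y ∉ V, ε ≤ |φ x - φ y|)
    (hΦmul : ∀ φ ∈ Φ, ∀ ψ ∈ Φ, (fun y => φ y * ψ y) ∈ Φ)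
    (μ₁ μ₂ : Measure X) [IsProbabilityMeasure μ₁] [IsProbabilityMeasure μ₂]
    (h : ∀ φ ∈ Φ, (∫ x, φ x ∂μ₁) = ∫ x, φ x ∂μ₂) : μ₁ = μ₂ := by
  rcases isEmpty_or_nonempty X with hX | hX
  · ext s _
    rw [eq_empty_of_isEmpty s]
    simp
  obtain ⟨x₀⟩ := hX
  obtain ⟨φ₀, hφ₀, -⟩ := hΦsep x₀ univ Filter.univ_mem
  obtain ⟨u, hu⟩ := Set.Countable.exists_eq_range hΦcount ⟨φ₀, hφ₀⟩
  have huΦ : ∀ n, u n ∈ Φ := fun n => hu ▸ mem_range_self n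
  have huc : ∀ n, Continuous (u n) := fun n => hΦc _ (huΦ n)
  set PS : Set (Set X) := {s | ∃ (F : Finset ℕ) (B : ℕ → Set ℝ),
      (∀ n, MeasurableSet (B n)) ∧ s = {x | ∀ n ∈ F, u n x ∈ B n}} with hPdef
  have hpi : IsPiSystem PS := by
    rintro s ⟨F, B, hB, rfl⟩ t ⟨F', B', hB', rfl⟩ -
    refine ⟨F ∪ F', fun n => (if n ∈ F then B n else univ) ∩ (if n ∈ F' then B' n else univ),
      fun n => MeasurableSet.inter (by split_ifs; exacts [hB n, .univ])
        (by split_ifs; exacts [hB' n, .univ]), ?_⟩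
    ext x
    simp only [mem_inter_iff, mem_setOf_eq, Finset.mem_union]
    constructor
    · rintro ⟨h1, h2⟩ n hn
      constructor
      · split_ifs with hf
        exacts [h1 n hf, mem_univ _]
      · split_ifs with hf
        exacts [h2 n hf, mem_univ _]
    · intro hall
      constructor
      · intro n hn
        have := (hall n (Or.inl hn)).1
        rwa [if_pos hn] at this
      · intro n hn
        have := (hall n (Or.inr hn)).2
        rwa [if_pos hn] at this
  have hgen : ‹MeasurableSpace X› = MeasurableSpace.generateFrom PS := by
    apply le_antisymm
    · rw [BorelSpace.measurable_eq (α := X)]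
      refine MeasurableSpace.generateFrom_le ?_
      intro U hU
      replace hU : IsOpen U := hU
      have key : ∀ x : U, ∃ V : Set X, V ∈ PS ∧ IsOpen V ∧ (x : X) ∈ V ∧ V ⊆ U := by
        rintro ⟨x, hx⟩
        obtain ⟨φ, hφ, ε, hε, hsep⟩ := hΦsep x U (hU.mem_nhds hx)
        have hφr : φ ∈ range u := by rwa [← hu]
        obtain ⟨n, rfl⟩ := hφr
        refine ⟨(u n) ⁻¹' (Metric.ball (u n x) ε), ?_, ?_, ?_, ?_⟩
        · refine ⟨{n}, fun _ => Metric.ball (u n x) ε, fun _ => measurableSet_ball, ?_⟩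
          ext y
          simp
        · exact (huc n).isOpen_preimage _ Metric.isOpen_ball
        · exact mem_preimage.2 (Metric.mem_ball_self hε)
        · intro y hy
          by_contra hyU
          have h1 := hsep y hyU
          have h2 : dist (u n y) (u n x) < ε := hy
          rw [Real.dist_eq, abs_sub_comm] at h2
          linarith
      choose V hVP hVopen hVmem hVsub using key
      obtain ⟨T, hTc, hTU⟩ := TopologicalSpace.isOpen_iUnion_countable V hVopen
      have hUeq : U = ⋃ x ∈ T, V x := by
        rw [hTU]
        apply Subset.antisymm
        · intro y hy
          exact mem_iUnion.2 ⟨⟨y, hy⟩, hVmem _⟩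
        · exact iUnion_subset fun x => hVsub x
      rw [hUeq]
      exact .biUnion hTc fun x _ => MeasurableSpace.measurableSet_generateFrom (hVP x)
    · refine MeasurableSpace.generateFrom_le ?_
      rintro s ⟨F, B, hB, rfl⟩
      have : {x | ∀ n ∈ F, u n x ∈ B n} = ⋂ n ∈ F, (u n) ⁻¹' (B n) := by
        ext x; simp
      rw [this]
      exact MeasurableSet.biInter F.countable_toSet fun n _ => (huc n).measurable (hB n)
  apply MeasureTheory.ext_of_generate_finite PS hgen hpi ?_ ?_
  · rintro s ⟨F, B, hB, rfl⟩
    haveI : Fintype (↥F) := FinsetCoe.fintype F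
    have hjoint := joint_eq hΦc hΦb hΦmul μ₁ μ₂ h (ι := ↥F) (fun j => u j) (fun j => huΦ j)
    set E : X → (↥F → ℝ) := fun x j => u j x with hE
    have hEm : Measurable E := measurable_pi_lambda _ fun j => (huc j).measurable
    have hBset : MeasurableSet (univ.pi fun j : ↥F => B j) :=
      MeasurableSet.univ_pi fun j => hB j
    have hpre : {x | ∀ n ∈ F, u n x ∈ B n} = E ⁻¹' (univ.pi fun j : ↥F => B j) := by
      ext x
      simp only [mem_setOf_eq, mem_preimage, Set.mem_pi, mem_univ, forall_true_left, hE]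
      constructor
      · intro hall j
        exact hall j j.2
      · intro hall n hn
        exact hall ⟨n, hn⟩
    rw [hpre, ← Measure.map_apply hEm hBset, ← Measure.map_apply hEm hBset, hjoint]
  · simp [measure_univ]


/-- If a countable family `Φ` of bounded continuous functions on a Polish space `X`
strongly separates points and is closed under multiplication, and two Borel
probability measures `P₁, P₂` on path space satisfy
`∫₀^∞ e^{-λt} ∫ φ(w(t)) Pᵢ(dw) dt = const` in `i` for all `λ` in a dense subset `Λ`
of `(0,∞)` and all `φ ∈ Φ`, then the one-dimensional marginals of `P₁` and `P₂`
coincide: `P₁ ∘ π_t⁻¹ = P₂ ∘ π_t⁻¹` for every `t ≥ 0`. -/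
theorem marginals_eq_of_laplace_functionals_eq
    {X : Type*} [TopologicalSpace X] [PolishSpace X] [MeasurableSpace X] [BorelSpace X]
    (Φ : Set (X → ℝ)) (hΦcount : Φ.Countable)
    (hΦc : ∀ φ ∈ Φ, Continuous φ)
    (hΦb : ∀ φ ∈ Φ, ∃ M, ∀ y, |φ y| ≤ M)
    (hΦsep : ∀ x : X, ∀ V ∈ nhds x, ∃ φ ∈ Φ, ∃ ε > 0, ∀ y ∉ V, ε ≤ |φ x - φ y|)
    (hΦmul : ∀ φ ∈ Φ, ∀ ψ ∈ Φ, (fun y => φ y * ψ y) ∈ Φ)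
    (Λ : Set ℝ) (hΛ : Λ ⊆ Ioi (0 : ℝ)) (hΛdense : Ioi (0 : ℝ) ⊆ closure Λ)
    (P₁ P₂ : Measure (IPath X)) [IsProbabilityMeasure P₁] [IsProbabilityMeasure P₂]
    (heq : ∀ lam ∈ Λ, ∀ φ ∈ Φ,
      (∫ t in Ioi (0 : ℝ), Real.exp (-lam * t) *
        ∫ w, φ (w (Real.toNNReal t)) ∂P₁) =
      (∫ t in Ioi (0 : ℝ), Real.exp (-lam * t) *
        ∫ w, φ (w (Real.toNNReal t)) ∂P₂)) :
    ∀ t : ℝ≥0,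
      Measure.map (fun w : IPath X => w t) P₁ =
      Measure.map (fun w : IPath X => w t) P₂ := by

  intro t
  have hevm : Measurable fun w : IPath X => w t := (continuous_eval_const t).measurable
  haveI : IsProbabilityMeasure (Measure.map (fun w : IPath X => w t) P₁) :=
    Measure.isProbabilityMeasure_map hevm.aemeasurable
  haveI : IsProbabilityMeasure (Measure.map (fun w : IPath X => w t) P₂) :=
    Measure.isProbabilityMeasure_map hevm.aemeasurable
  apply measure_ext_Phi Φ hΦcount hΦc hΦb hΦsep hΦmul
  intro φ hφ
  obtain ⟨M, hM⟩ := hΦb φ hφ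
  have hFc : ∀ P : Measure (IPath X), IsProbabilityMeasure P →
      Continuous fun s : ℝ => ∫ w, φ (w (Real.toNNReal s)) ∂P := by
    intro P hP
    apply continuous_of_dominated (bound := fun _ => M)
    · intro s
      exact ((hΦc φ hφ).comp (continuous_eval_const (Real.toNNReal s))).aestronglyMeasurable
    · intro s
      filter_upwards with w
      rw [Real.norm_eq_abs]
      exact hM _
    · exact integrable_const M
    · filter_upwards with w
      exact (hΦc φ hφ).comp (w.continuous.comp continuous_real_toNNReal)
  have hFb : ∀ P : Measure (IPath X), IsProbabilityMeasure P →
      ∀ s : ℝ, |∫ w, φ (w (Real.toNNReal s)) ∂P| ≤ M := by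
    intro P hP s
    rw [← Real.norm_eq_abs]
    have := norm_integral_le_of_norm_le_const (μ := P)
      (f := fun w => φ (w (Real.toNNReal s))) (C := M)
      (Filter.Eventually.of_forall fun w => by rw [Real.norm_eq_abs]; exact hM _)
    simpa [measure_univ] using this
  have key := eqOn_of_laplace_eqOn
    (fun s : ℝ => ∫ w, φ (w (Real.toNNReal s)) ∂P₁)
    (fun s : ℝ => ∫ w, φ (w (Real.toNNReal s)) ∂P₂)
    (hFc P₁ inferInstance) (hFc P₂ inferInstance) M
    (hFb P₁ inferInstance) (hFb P₂ inferInstance) Λ hΛ hΛdense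
    (fun lam hlam => heq lam hlam φ hφ)
  have hFt := key (t : ℝ) t.coe_nonneg
  simp only [Real.toNNReal_coe] at hFt
  rw [integral_map hevm.aemeasurable (hΦc φ hφ).aestronglyMeasurable,
    integral_map hevm.aemeasurable (hΦc φ hφ).aestronglyMeasurable]
  exact hFt
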